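/- With α₁ = 3c²h²/(4(12 - c²h²)), for u(x) = sin(cx) the truncation error of the pseudo-bubble scheme equals sin(cx)·[c⁴h²(1/12 - 3/(4(12 - c²h²))) + c⁶h⁴(-1/90 + 3/(16(12 - c²h²)))] + O(c⁸h⁶). -/

import Mathlib

open Finset Complex

lemma cos_taylor8 {t : ℝ} (ht : |t| ≤ 1) :
    |Real.cos t - (1 - t ^ 2 / 2 + t ^ 4 / 24 - t ^ 6 / 720)| ≤ |t| ^ 8 := by
  have hcos : (Real.cos t : ℂ) = (Complex.exp (t * I) + Complex.exp (-t * I)) / 2 := by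
    rw [Complex.ofReal_cos, Complex.cos]
  have hsum : (∑ m ∈ range 8, (t * I : ℂ) ^ m / m.factorial) +
      (∑ m ∈ range 8, (-t * I : ℂ) ^ m / m.factorial) =
      2 * (1 - (t:ℂ) ^ 2 / 2 + (t:ℂ) ^ 4 / 24 - (t:ℂ) ^ 6 / 720) := by
    have h6 : (I:ℂ) ^ 6 = -1 := by
      rw [show (6:ℕ) = 2 * 3 from rfl, pow_mul, Complex.I_sq]; norm_num
    have h4 : (I:ℂ) ^ 4 = 1 := by
      rw [show (4:ℕ) = 2 * 2 from rfl, pow_mul, Complex.I_sq]; norm_num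
    simp [Finset.sum_range_succ, Nat.factorial]
    ring_nf
    rw [h6]
    ring_nf
    rw [Complex.I_sq, h4]
    ring
  have key : Real.cos t - (1 - t ^ 2 / 2 + t ^ 4 / 24 - t ^ 6 / 720) =
      (((Complex.exp (t * I) - ∑ m ∈ range 8, (t * I) ^ m / m.factorial) +
        (Complex.exp (-t * I) - ∑ m ∈ range 8, (-t * I) ^ m / m.factorial)) / 2).re := by
    have h2 : ((Complex.exp (t * I) - ∑ m ∈ range 8, (t * I) ^ m / m.factorial) +
        (Complex.exp (-t * I) - ∑ m ∈ range 8, (-t * I) ^ m / m.factorial)) / 2 =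
        (Real.cos t : ℂ) - ((1 : ℂ) - (t:ℂ) ^ 2 / 2 + (t:ℂ) ^ 4 / 24 - (t:ℂ) ^ 6 / 720) := by
      linear_combination -hcos - hsum / 2
    rw [h2]
    norm_num [← Complex.ofReal_pow, Complex.cos_ofReal_re]
  rw [key]
  have h8 : (0:ℝ) ≤ |t| ^ 8 := by positivity
  calc _ ≤ ‖(((Complex.exp (t * I) - ∑ m ∈ range 8, (t * I) ^ m / m.factorial) +
        (Complex.exp (-t * I) - ∑ m ∈ range 8, (-t * I) ^ m / m.factorial)) / 2)‖ :=
        Complex.abs_re_le_norm _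
    _ ≤ (‖(Complex.exp (t * I) - ∑ m ∈ range 8, (t * I) ^ m / m.factorial)‖ +
        ‖(Complex.exp (-t * I) - ∑ m ∈ range 8, (-t * I) ^ m / m.factorial)‖) / 2 := by
        rw [norm_div, Complex.norm_two]
        gcongr
        exact norm_add_le _ _
    _ ≤ (‖(t * I : ℂ)‖ ^ 8 * ((8:ℕ).succ * ((Nat.factorial 8 : ℝ) * 8)⁻¹) +
        ‖(-t * I : ℂ)‖ ^ 8 * ((8:ℕ).succ * ((Nat.factorial 8 : ℝ) * 8)⁻¹)) / 2 := by
        gcongr <;> exact Complex.exp_bound (by simpa) (by norm_num)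
    _ ≤ |t| ^ 8 := by
        simp only [norm_mul, Complex.norm_I, mul_one, Complex.norm_real, Real.norm_eq_abs, norm_neg]
        norm_num [Nat.factorial]
        nlinarith [h8]


open Real Filter Asymptotics

set_option maxHeartbeats 1000000 in
/-- Truncation error of the pseudo-bubble scheme with α₁ = 3c²h²/(4(12-c²h²))
for u(x) = sin(cx). -/
theorem stmt4 (c x : ℝ) (hc : 0 < c) :
    (fun h : ℝ =>
        (-(Real.sin (c * (x + h)) - 2 * Real.sin (c * x) + Real.sin (c * (x - h))) / h ^ 2
          - c ^ 2 * (Real.sin (c * (x + h)) + 4 * Real.sin (c * x)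
              + Real.sin (c * (x - h))) / 6
          - (3 * c ^ 2 * h ^ 2 / (4 * (12 - c ^ 2 * h ^ 2))) * c ^ 2
              * (Real.sin (c * (x + h)) + 2 * Real.sin (c * x)
                  + Real.sin (c * (x - h))) / 4)
        - Real.sin (c * x) *
            (c ^ 4 * h ^ 2 * (1 / 12 - 3 / (4 * (12 - c ^ 2 * h ^ 2)))
              + c ^ 6 * h ^ 4 * (-(1 / 90) + 3 / (16 * (12 - c ^ 2 * h ^ 2)))))
      =O[nhdsWithin 0 (Set.Ioi 0)] (fun h : ℝ => c ^ 8 * h ^ 6) := by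
  rw [Asymptotics.isBigO_iff]
  refine ⟨4, ?_⟩
  have hmem : Set.Ioo (0:ℝ) (1/c) ∈ nhdsWithin (0:ℝ) (Set.Ioi 0) :=
    Ioo_mem_nhdsGT_of_mem ⟨le_refl _, by positivity⟩
  filter_upwards [hmem] with h hh
  obtain ⟨hh0, hh1⟩ := hh
  have hch : c * h < 1 := by
    have := (lt_div_iff₀ hc).mp hh1
    linarith [this]
  have hch0 : 0 < c * h := by positivity
  have ht : |c * h| ≤ 1 := by rw [abs_of_pos hch0]; exact hch.le
  have hr := cos_taylor8 ht
  have hs1 : c ^ 2 * h ^ 2 < 1 := by nlinarith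
  have hd1 : (11:ℝ) < 12 - c ^ 2 * h ^ 2 := by nlinarith
  have hd0 : (12:ℝ) - c ^ 2 * h ^ 2 ≠ 0 := by linarith
  have hh' : h ≠ 0 := ne_of_gt hh0
  have hr' : |Real.cos (c*h) - (1 - (c*h) ^ 2 / 2 + (c*h) ^ 4 / 24 - (c*h) ^ 6 / 720)|
      ≤ c ^ 8 * h ^ 8 := by
    refine hr.trans (le_of_eq ?_)
    rw [abs_of_pos hch0]
    ring
  set r := Real.cos (c*h) - (1 - (c*h) ^ 2 / 2 + (c*h) ^ 4 / 24 - (c*h) ^ 6 / 720) with hrdef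
  have identity :
      (-(Real.sin (c * (x + h)) - 2 * Real.sin (c * x) + Real.sin (c * (x - h))) / h ^ 2
          - c ^ 2 * (Real.sin (c * (x + h)) + 4 * Real.sin (c * x)
              + Real.sin (c * (x - h))) / 6
          - (3 * c ^ 2 * h ^ 2 / (4 * (12 - c ^ 2 * h ^ 2))) * c ^ 2
              * (Real.sin (c * (x + h)) + 2 * Real.sin (c * x)
                  + Real.sin (c * (x - h))) / 4)
        - Real.sin (c * x) *
            (c ^ 4 * h ^ 2 * (1 / 12 - 3 / (4 * (12 - c ^ 2 * h ^ 2)))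
              + c ^ 6 * h ^ 4 * (-(1 / 90) + 3 / (16 * (12 - c ^ 2 * h ^ 2)))) =
      Real.sin (c * x) *
        (c ^ 8 * h ^ 6 / 2160 - c ^ 8 * h ^ 6 / (64 * (12 - c ^ 2 * h ^ 2))
          + c ^ 10 * h ^ 8 / (1920 * (12 - c ^ 2 * h ^ 2))
          + r * (-(2 / h ^ 2) - c ^ 2 / 3
              - 3 * c ^ 4 * h ^ 2 / (8 * (12 - c ^ 2 * h ^ 2)))) := by
    rw [hrdef]
    have e1 : c * (x + h) = c * x + c * h := by ring
    have e2 : c * (x - h) = c * x - c * h := by ring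
    rw [e1, e2, Real.sin_add, Real.sin_sub]
    field_simp
    ring
  rw [identity]
  have hsin : |Real.sin (c * x)| ≤ 1 := Real.abs_sin_le_one _
  have hP : (0:ℝ) < c ^ 8 * h ^ 6 := by positivity
  simp only [Real.norm_eq_abs]
  rw [abs_mul, abs_of_pos hP]
  have h1 : |c ^ 8 * h ^ 6 / 2160| = c ^ 8 * h ^ 6 / 2160 := by
    rw [abs_of_pos]; positivity
  have h2 : |c ^ 8 * h ^ 6 / (64 * (12 - c ^ 2 * h ^ 2))| ≤ c ^ 8 * h ^ 6 / 704 := by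
    rw [abs_of_pos (by positivity)]
    gcongr
    linarith
  have h3 : |c ^ 10 * h ^ 8 / (1920 * (12 - c ^ 2 * h ^ 2))| ≤ c ^ 8 * h ^ 6 / 1920 := by
    rw [abs_of_pos (by positivity)]
    rw [div_le_div_iff₀ (by positivity) (by norm_num)]
    have hp : (0:ℝ) ≤ c ^ 8 * h ^ 6 := by positivity
    nlinarith [mul_nonneg hp (sub_nonneg.mpr hs1.le)]
  have hW : |(-(2 / h ^ 2) - c ^ 2 / 3 - 3 * c ^ 4 * h ^ 2 / (8 * (12 - c ^ 2 * h ^ 2)))|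
      ≤ 2 / h ^ 2 + c ^ 2 / 3 + 3 * c ^ 4 * h ^ 2 / 88 := by
    have hw0 : (0:ℝ) ≤ 2 / h ^ 2 + c ^ 2 / 3 + 3 * c ^ 4 * h ^ 2 / (8 * (12 - c ^ 2 * h ^ 2)) := by
      positivity
    have : (-(2 / h ^ 2) - c ^ 2 / 3 - 3 * c ^ 4 * h ^ 2 / (8 * (12 - c ^ 2 * h ^ 2)))
        = -(2 / h ^ 2 + c ^ 2 / 3 + 3 * c ^ 4 * h ^ 2 / (8 * (12 - c ^ 2 * h ^ 2))) := by ring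
    rw [this, abs_neg, _root_.abs_of_nonneg hw0]
    gcongr
    linarith
  have hrw : |r * (-(2 / h ^ 2) - c ^ 2 / 3 - 3 * c ^ 4 * h ^ 2 / (8 * (12 - c ^ 2 * h ^ 2)))|
      ≤ c ^ 8 * h ^ 8 * (2 / h ^ 2 + c ^ 2 / 3 + 3 * c ^ 4 * h ^ 2 / 88) := by
    rw [abs_mul]
    exact mul_le_mul hr' hW (abs_nonneg _) (by positivity)
  have hrw2 : c ^ 8 * h ^ 8 * (2 / h ^ 2 + c ^ 2 / 3 + 3 * c ^ 4 * h ^ 2 / 88)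
      ≤ 3 * (c ^ 8 * h ^ 6) := by
    have e : c ^ 8 * h ^ 8 * (2 / h ^ 2) = 2 * (c ^ 8 * h ^ 6) := by
      field_simp
    have hp : (0:ℝ) ≤ c ^ 8 * h ^ 6 := by positivity
    have k1 : c ^ 8 * h ^ 8 * (c ^ 2 / 3) ≤ c ^ 8 * h ^ 6 / 3 := by
      nlinarith [mul_nonneg hp (sub_nonneg.mpr hs1.le)]
    have q : (0:ℝ) ≤ c ^ 8 * h ^ 6 * (1 - (c ^ 2 * h ^ 2) ^ 2) := by
      apply mul_nonneg hp
      nlinarith [sq_nonneg (c ^ 2 * h ^ 2)]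
    have k2 : c ^ 8 * h ^ 8 * (3 * c ^ 4 * h ^ 2 / 88) ≤ c ^ 8 * h ^ 6 * (3 / 88) := by
      nlinarith [q]
    nlinarith [e, k1, k2, hp]
  calc |Real.sin (c * x)| *
        |c ^ 8 * h ^ 6 / 2160 - c ^ 8 * h ^ 6 / (64 * (12 - c ^ 2 * h ^ 2))
          + c ^ 10 * h ^ 8 / (1920 * (12 - c ^ 2 * h ^ 2))
          + r * (-(2 / h ^ 2) - c ^ 2 / 3
              - 3 * c ^ 4 * h ^ 2 / (8 * (12 - c ^ 2 * h ^ 2)))|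
      ≤ 1 * |c ^ 8 * h ^ 6 / 2160 - c ^ 8 * h ^ 6 / (64 * (12 - c ^ 2 * h ^ 2))
          + c ^ 10 * h ^ 8 / (1920 * (12 - c ^ 2 * h ^ 2))
          + r * (-(2 / h ^ 2) - c ^ 2 / 3
              - 3 * c ^ 4 * h ^ 2 / (8 * (12 - c ^ 2 * h ^ 2)))| := by
        gcongr
    _ ≤ |c ^ 8 * h ^ 6 / 2160| + |c ^ 8 * h ^ 6 / (64 * (12 - c ^ 2 * h ^ 2))|
          + |c ^ 10 * h ^ 8 / (1920 * (12 - c ^ 2 * h ^ 2))|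
          + |r * (-(2 / h ^ 2) - c ^ 2 / 3
              - 3 * c ^ 4 * h ^ 2 / (8 * (12 - c ^ 2 * h ^ 2)))| := by
        rw [one_mul]
        calc _ ≤ |c ^ 8 * h ^ 6 / 2160 - c ^ 8 * h ^ 6 / (64 * (12 - c ^ 2 * h ^ 2))
              + c ^ 10 * h ^ 8 / (1920 * (12 - c ^ 2 * h ^ 2))|
              + |r * (-(2 / h ^ 2) - c ^ 2 / 3
                  - 3 * c ^ 4 * h ^ 2 / (8 * (12 - c ^ 2 * h ^ 2)))| := abs_add_le _ _
          _ ≤ _ := by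
              gcongr ?_ + _
              calc _ ≤ |c ^ 8 * h ^ 6 / 2160 - c ^ 8 * h ^ 6 / (64 * (12 - c ^ 2 * h ^ 2))|
                    + |c ^ 10 * h ^ 8 / (1920 * (12 - c ^ 2 * h ^ 2))| := abs_add_le _ _
                _ ≤ _ := by
                    gcongr ?_ + _
                    exact abs_sub _ _
    _ ≤ 4 * (c ^ 8 * h ^ 6) := by
        have := hrw.trans hrw2
        rw [h1]
        nlinarith [h2, h3, this, hP]
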